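/- Let a,b,c,d be integers with ad − bc = 1 and |a + d| > 2, set N = |a + d + 2| and r = gcd(a+1, c, b, d+1). Then the image of the group homomorphism f : ℤ × ℤ → ℤ/N × ℤ/N given by f(μ,ν) = ((d+1)μ − cν, −bμ + (a+1)ν) is isomorphic, as an abelian group, to ℤ/r × ℤ/(N/r). -/

import Mathlib

def piFinTwoAddEquiv (G : Fin 2 → Type*) [∀ i, AddZeroClass (G i)] :
    (∀ i, G i) ≃+ G 0 × G 1 :=
  { piFinTwoEquiv G with map_add' := fun _ _ => rfl }

theorem quot_equiv_of_diag (L : Submodule ℤ (ℤ × ℤ)) (b : Module.Basis (Fin 2) ℤ (ℤ × ℤ))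
    (α : Fin 2 → ℤ) (h : ∀ x, x ∈ L ↔ ∀ i, α i ∣ b.repr x i) :
    Nonempty (((ℤ × ℤ) ⧸ L) ≃+ ZMod (α 0).natAbs × ZMod (α 1).natAbs) := by
  classical
  set I' : Submodule ℤ (Fin 2 → ℤ) :=
    Submodule.pi Set.univ (fun i => Ideal.span ({α i} : Set ℤ)) with hI'
  have hmap : L.map (b.equivFun : (ℤ × ℤ) →ₗ[ℤ] (Fin 2 → ℤ)) = I' := by
    ext v
    simp only [hI', Submodule.mem_map, Submodule.mem_pi, Set.mem_univ, forall_true_left,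
      Ideal.mem_span_singleton, LinearEquiv.coe_coe, Module.Basis.equivFun_apply]
    constructor
    · rintro ⟨x, hx, rfl⟩ i
      exact (h x).mp hx i
    · intro hv
      refine ⟨v 0 • b 0 + v 1 • b 1, ?_, ?_⟩
      · rw [h]
        intro i
        have : ∀ j, b.repr (v 0 • b 0 + v 1 • b 1) j = v j := by
          intro j
          simp only [map_add, map_smul, Module.Basis.repr_self, Finsupp.coe_add, Finsupp.coe_smul,
            Pi.add_apply, Pi.smul_apply, Finsupp.single_apply, smul_eq_mul]
          fin_cases j <;> simp
        rw [this]; exact hv i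
      · funext j
        simp only [map_add, map_smul, Module.Basis.repr_self, Finsupp.coe_add, Finsupp.coe_smul,
          Pi.add_apply, Pi.smul_apply, Finsupp.single_apply, smul_eq_mul]
        fin_cases j <;> simp
  have E1 := Submodule.Quotient.equiv L I' b.equivFun hmap
  have E2 := Submodule.quotientPi (R := ℤ) (Ms := fun _ : Fin 2 => ℤ)
    (fun i => Ideal.span ({α i} : Set ℤ))
  have E3 : (∀ i : Fin 2, ℤ ⧸ Ideal.span ({α i} : Set ℤ)) ≃+
      (∀ i : Fin 2, ZMod (α i).natAbs) :=
    AddEquiv.piCongrRight fun i => (Int.quotientSpanEquivZMod (α i)).toAddEquiv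
  exact ⟨E1.toAddEquiv.trans (E2.toAddEquiv.trans (E3.trans
    (piFinTwoAddEquiv (fun i => ZMod (α i).natAbs))))⟩

theorem zmod_prod_equiv_gcd_lcm : ∀ m : ℕ, ∀ n : ℕ,
    Nonempty (ZMod m × ZMod n ≃+ ZMod (Nat.gcd m n) × ZMod (Nat.lcm m n)) := by
  intro m
  induction m using Nat.strong_induction_on with
  | _ m IH =>
  intro n
  rcases eq_or_ne n 0 with rfl | hn0
  · rw [Nat.gcd_zero_right, Nat.lcm_zero_right]
    exact ⟨AddEquiv.refl _⟩
  rcases eq_or_ne m 0 with rfl | hm0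
  · rw [Nat.gcd_zero_left, Nat.lcm_zero_left]
    exact ⟨AddEquiv.prodComm⟩
  rcases eq_or_ne m 1 with rfl | hm1
  · rw [Nat.gcd_one_left, Nat.lcm_one_left]
    exact ⟨AddEquiv.refl _⟩
  -- main case
  set p := m.minFac with hp
  have pp : p.Prime := Nat.minFac_prime hm1
  set α := m.factorization p with hα
  set β := n.factorization p with hβ
  set m' := m / p ^ α with hm'
  set n' := n / p ^ β with hn'
  have hm : p ^ α * m' = m := Nat.ordProj_mul_ordCompl_eq_self m p
  have hn : p ^ β * n' = n := Nat.ordProj_mul_ordCompl_eq_self n p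
  have hm'0 : m' ≠ 0 := (Nat.ordCompl_pos p hm0).ne'
  have hn'0 : n' ≠ 0 := (Nat.ordCompl_pos p hn0).ne'
  have hpm' : ¬ p ∣ m' := Nat.not_dvd_ordCompl pp hm0
  have hpn' : ¬ p ∣ n' := Nat.not_dvd_ordCompl pp hn0
  have cpm' : Nat.Coprime p m' := (Nat.Prime.coprime_iff_not_dvd pp).mpr hpm'
  have cpn' : Nat.Coprime p n' := (Nat.Prime.coprime_iff_not_dvd pp).mpr hpn'
  have hα1 : 1 ≤ α := (Nat.Prime.factorization_pos_of_dvd pp hm0 (Nat.minFac_dvd m))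
  have hpα : 2 ≤ p ^ α := le_trans pp.two_le (Nat.le_self_pow (by omega) p)
  have hm'lt : m' < m := by
    calc m' < 2 * m' := by omega
    _ ≤ p ^ α * m' := Nat.mul_le_mul_right m' hpα
    _ = m := hm
  obtain ⟨E'⟩ := IH m' hm'lt n'
  have hg : Nat.gcd m n = p ^ (min α β) * Nat.gcd m' n' := by
    rw [← hm, ← hn]
    rcases le_total α β with h | h
    · rw [min_eq_left h, show p ^ β = p ^ α * p ^ (β - α) by
        rw [← pow_add]; congr 1; omega, mul_assoc, Nat.gcd_mul_left]
      congr 1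
      exact Nat.Coprime.gcd_mul_left_cancel_right n' (Nat.Coprime.pow_left _ cpm')
    · rw [min_eq_right h, show p ^ α = p ^ β * p ^ (α - β) by
        rw [← pow_add]; congr 1; omega, mul_assoc, Nat.gcd_mul_left]
      congr 1
      exact Nat.Coprime.gcd_mul_left_cancel m' (Nat.Coprime.pow_left _ cpn')
  have hgl' := Nat.gcd_mul_lcm m' n'
  have hl : Nat.lcm m n = p ^ (max α β) * Nat.lcm m' n' := by
    have h1 := Nat.gcd_mul_lcm m n
    rw [hg] at h1
    have h2 : p ^ (min α β) * Nat.gcd m' n' * (p ^ (max α β) * Nat.lcm m' n') = m * n := by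
      rw [← hm, ← hn]
      calc p ^ (min α β) * Nat.gcd m' n' * (p ^ (max α β) * Nat.lcm m' n')
          = p ^ (min α β) * p ^ (max α β) * (Nat.gcd m' n' * Nat.lcm m' n') := by ring
        _ = p ^ α * p ^ β * (m' * n') := by
            rw [hgl', ← pow_add, show α ⊓ β + α ⊔ β = α + β by omega, pow_add]
        _ = p ^ α * m' * (p ^ β * n') := by ring
    have hpos : 0 < p ^ (min α β) * Nat.gcd m' n' :=
      Nat.mul_pos (pow_pos pp.pos _)
        (Nat.gcd_pos_of_pos_left _ (Nat.pos_of_ne_zero hm'0))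
    exact Nat.eq_of_mul_eq_mul_left hpos (h1.trans h2.symm)
  obtain ⟨Ep⟩ : Nonempty (ZMod (p ^ α) × ZMod (p ^ β) ≃+
      ZMod (p ^ (min α β)) × ZMod (p ^ (max α β))) := by
    rcases le_total α β with h | h
    · rw [min_eq_left h, max_eq_right h]; exact ⟨AddEquiv.refl _⟩
    · rw [min_eq_right h, max_eq_left h]; exact ⟨AddEquiv.prodComm⟩
  have crt1 : ZMod m ≃+ ZMod (p ^ α) × ZMod m' := by
    rw [← hm]; exact (ZMod.chineseRemainder (Nat.Coprime.pow_left _ cpm')).toAddEquiv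
  have crt2 : ZMod n ≃+ ZMod (p ^ β) × ZMod n' := by
    rw [← hn]; exact (ZMod.chineseRemainder (Nat.Coprime.pow_left _ cpn')).toAddEquiv
  have cg : Nat.Coprime (p ^ (min α β)) (Nat.gcd m' n') :=
    Nat.Coprime.pow_left _ (Nat.Coprime.coprime_dvd_right (Nat.gcd_dvd_left m' n') cpm')
  have cl : Nat.Coprime (p ^ (max α β)) (Nat.lcm m' n') :=
    Nat.Coprime.pow_left _
      (Nat.Coprime.coprime_dvd_right (Nat.lcm_dvd_mul m' n') (cpm'.mul_right cpn'))
  have crt3 : ZMod (Nat.gcd m n) ≃+ ZMod (p ^ (min α β)) × ZMod (Nat.gcd m' n') := by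
    rw [hg]; exact (ZMod.chineseRemainder cg).toAddEquiv
  have crt4 : ZMod (Nat.lcm m n) ≃+ ZMod (p ^ (max α β)) × ZMod (Nat.lcm m' n') := by
    rw [hl]; exact (ZMod.chineseRemainder cl).toAddEquiv
  exact ⟨(crt1.prodCongr crt2).trans <| (AddEquiv.prodProdProdComm _ _ _ _).trans <|
    (Ep.prodCongr E').trans <| (AddEquiv.prodProdProdComm _ _ _ _).trans <|
    (crt3.symm).prodCongr (crt4.symm)⟩

/-- The homomorphism `f : ℤ × ℤ → ℤ/N × ℤ/N`,
`f(μ,ν) = ((d+1)μ − cν, −bμ + (a+1)ν)`. -/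
def torusBundleF (a b c d : ℤ) (N : ℕ) : ℤ × ℤ →+ ZMod N × ZMod N :=
  AddMonoidHom.mk'
    (fun p => ((((d + 1) * p.1 - c * p.2 : ℤ) : ZMod N),
               (((-b) * p.1 + (a + 1) * p.2 : ℤ) : ZMod N)))
    (by
      intro p q
      simp only [Prod.fst_add, Prod.snd_add, Prod.mk_add_mk, Prod.mk.injEq]
      constructor <;> · push_cast; ring)

theorem stmt_0 (a b c d : ℤ) (h1 : a * d - b * c = 1) (h2 : 2 < |a + d|)
    (N : ℕ) (hN : N = (a + d + 2).natAbs)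
    (r : ℕ) (hr : r = Int.gcd (a + 1) (Int.gcd c (Int.gcd b (d + 1)))) :
    Nonempty ((torusBundleF a b c d N).range ≃+ ZMod r × ZMod (N / r)) := by
  classical
  set D : ℤ := a + d + 2 with hD
  have had : a + d ≠ -2 := by
    intro h; rw [h] at h2; norm_num at h2
  have hD0 : D ≠ 0 := by omega
  have hdet : (a + 1) * (d + 1) - b * c = D := by linear_combination h1
  set w₁ : ℤ × ℤ := (a + 1, b) with hw₁
  set w₂ : ℤ × ℤ := (c, d + 1) with hw₂
  set L : Submodule ℤ (ℤ × ℤ) := Submodule.span ℤ {w₁, w₂} with hL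
  set F := torusBundleF a b c d N with hF
  set Flin := F.toIntLinearMap with hFlin
  have hFapp : ∀ p : ℤ × ℤ, Flin p =
      ((((d + 1) * p.1 - c * p.2 : ℤ) : ZMod N), (((-b) * p.1 + (a + 1) * p.2 : ℤ) : ZMod N)) :=
    fun p => rfl
  -- kernel characterization
  have hzero : ∀ z : ℤ, ((z : ℤ) : ZMod N) = 0 ↔ D ∣ z := by
    intro z
    rw [ZMod.intCast_zmod_eq_zero_iff_dvd, hN]
    exact ⟨fun h => (Int.natAbs_dvd).mp h, fun h => (Int.natAbs_dvd).mpr h⟩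
  have hker : LinearMap.ker Flin = L := by
    ext x
    rw [LinearMap.mem_ker, hFapp, hL, Submodule.mem_span_pair, Prod.mk_eq_zero, hzero, hzero]
    constructor
    · rintro ⟨⟨s, hs⟩, ⟨t, ht⟩⟩
      refine ⟨s, t, ?_⟩
      have e1 : D * (s * (a + 1) + t * c) = D * x.1 := by
        linear_combination (-(a+1)) * hs - c * ht + x.1 * hdet
      have e2 : D * (s * b + t * (d + 1)) = D * x.2 := by
        linear_combination (-b) * hs - (d+1) * ht + x.2 * hdet
      have e1' := mul_left_cancel₀ hD0 e1
      have e2' := mul_left_cancel₀ hD0 e2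
      ext
      · simpa [hw₁, hw₂] using e1'
      · simpa [hw₁, hw₂] using e2'
    · rintro ⟨s, t, rfl⟩
      constructor
      · exact ⟨s, by simp [hw₁, hw₂]; linear_combination s * hdet⟩
      · exact ⟨t, by simp [hw₁, hw₂]; linear_combination t * hdet⟩
  -- the linear map with columns w₁ w₂, giving a basis of L
  set φ : (ℤ × ℤ) →ₗ[ℤ] (ℤ × ℤ) :=
    { toFun := fun p => p.1 • w₁ + p.2 • w₂
      map_add' := by intro p q; simp only [Prod.fst_add, Prod.snd_add, add_smul]; abel
      map_smul' := by
        intro m p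
        simp only [Prod.smul_fst, Prod.smul_snd, RingHom.id_apply, smul_smul, smul_add,
          smul_eq_mul] } with hφ
  have hφapp : ∀ p : ℤ × ℤ, φ p = p.1 • w₁ + p.2 • w₂ := fun p => rfl
  have hφr : LinearMap.range φ = L := by
    ext x
    rw [LinearMap.mem_range, hL, Submodule.mem_span_pair]
    constructor
    · rintro ⟨y, rfl⟩; exact ⟨y.1, y.2, rfl⟩
    · rintro ⟨s, t, rfl⟩; exact ⟨(s, t), rfl⟩
  have hφ0 : ∀ p : ℤ × ℤ, φ p = 0 → p = 0 := by
    intro p hp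
    rw [hφapp] at hp
    have hc1 : p.1 * (a + 1) + p.2 * c = 0 := congrArg Prod.fst hp
    have hc2 : p.1 * b + p.2 * (d + 1) = 0 := congrArg Prod.snd hp
    have e1 : D * p.1 = 0 := by linear_combination (d+1) * hc1 - c * hc2 - p.1 * hdet
    have e2 : D * p.2 = 0 := by linear_combination (-b) * hc1 + (a+1) * hc2 - p.2 * hdet
    have := (mul_eq_zero.mp e1).resolve_left hD0
    have := (mul_eq_zero.mp e2).resolve_left hD0
    ext <;> assumption
  have hφinj : Function.Injective φ := by
    intro p q hpq
    have : φ (p - q) = 0 := by rw [map_sub, hpq, sub_self]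
    have := hφ0 _ this
    exact sub_eq_zero.mp this
  -- basis of L of size 2, hence Smith normal form has n = 2
  set eL : (ℤ × ℤ) ≃ₗ[ℤ] L :=
    (LinearEquiv.ofInjective φ hφinj).trans (LinearEquiv.ofEq _ _ hφr) with heL
  set bw : Module.Basis (Fin 2) ℤ L := (Module.Basis.finTwoProd ℤ).map eL with hbw
  obtain ⟨n, snf⟩ := Submodule.smithNormalForm (Module.Basis.finTwoProd ℤ) L
  have hn2 : n = 2 := by
    have e1 := Module.finrank_eq_card_basis snf.bN
    have e2 := Module.finrank_eq_card_basis bw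
    rw [Fintype.card_fin] at e1 e2
    omega
  subst hn2
  set e : Fin 2 ≃ Fin 2 :=
    Equiv.ofBijective snf.f (Finite.injective_iff_bijective.mp snf.f.injective) with he
  set α : Fin 2 → ℤ := snf.a ∘ e.symm with hα
  set bM : Module.Basis (Fin 2) ℤ (ℤ × ℤ) := snf.bM with hbM
  set bL : Module.Basis (Fin 2) ℤ L := snf.bN.reindex e with hbL
  have hdiag : ∀ i, (bL i : ℤ × ℤ) = α i • bM i := by
    intro i
    have hfe : snf.f (e.symm i) = i := by
      have h' : snf.f (e.symm i) = e (e.symm i) := rfl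
      rw [h', Equiv.apply_symm_apply]
    rw [hbL, Module.Basis.reindex_apply, snf.snf (e.symm i), hfe]
    rfl
  -- membership characterization
  have hmemchar : ∀ x : ℤ × ℤ, x ∈ L ↔ ∀ i, α i ∣ bM.repr x i := by
    intro x
    constructor
    · intro hx i
      obtain ⟨j, rfl⟩ := e.surjective i
      have hsnf := snf.repr_apply_embedding_eq_repr_smul (m := ⟨x, hx⟩) (i := j)
      have hfj : snf.f j = e j := rfl
      rw [hfj] at hsnf
      rw [hbM, hsnf, map_smul]
      have : α (e j) = snf.a j := by rw [hα]; simp [Function.comp]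
      rw [this]
      exact ⟨snf.bN.repr ⟨x, hx⟩ j, rfl⟩
    · intro hdvd
      obtain ⟨c0, hc0⟩ := hdvd 0
      obtain ⟨c1, hc1⟩ := hdvd 1
      have hx : x = bM.repr x 0 • bM 0 + bM.repr x 1 • bM 1 := by
        have := bM.sum_repr x
        rw [Fin.sum_univ_two] at this
        exact this.symm
      rw [hx, hc0, hc1]
      have : (α 0 * c0) • bM 0 + (α 1 * c1) • bM 1
          = c0 • (bL 0 : ℤ × ℤ) + c1 • (bL 1 : ℤ × ℤ) := by
        rw [hdiag 0, hdiag 1, smul_smul, smul_smul, mul_comm c0, mul_comm c1]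
      rw [this]
      exact L.add_mem (L.smul_mem _ (bL 0).2) (L.smul_mem _ (bL 1).2)
  -- component notation
  set u0 : ℤ × ℤ := bM 0 with hu0
  set u1 : ℤ × ℤ := bM 1 with hu1
  set Du : ℤ := u0.1 * u1.2 - u0.2 * u1.1 with hDu
  have hbasis_expand : ∀ x : ℤ × ℤ, x = bM.repr x 0 • u0 + bM.repr x 1 • u1 := by
    intro x
    have := bM.sum_repr x
    rw [Fin.sum_univ_two] at this
    exact this.symm
  have hcomp1 : ∀ (s t : ℤ) (v w : ℤ × ℤ), (s • v + t • w).1 = s * v.1 + t * w.1 := by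
    intros; simp
  have hcomp2 : ∀ (s t : ℤ) (v w : ℤ × ℤ), (s • v + t • w).2 = s * v.2 + t * w.2 := by
    intros; simp
  -- Du is a unit
  have hDu1 : Du.natAbs = 1 := by
    have hE1 := hbasis_expand (1, 0)
    have hE2 := hbasis_expand (0, 1)
    set p00 := bM.repr (1, 0) 0
    set p01 := bM.repr (1, 0) 1
    set p10 := bM.repr (0, 1) 0
    set p11 := bM.repr (0, 1) 1
    have c11 : (1 : ℤ) = p00 * u0.1 + p01 * u1.1 := by
      have := congrArg Prod.fst hE1; rwa [hcomp1] at this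
    have c12 : (0 : ℤ) = p00 * u0.2 + p01 * u1.2 := by
      have := congrArg Prod.snd hE1; rwa [hcomp2] at this
    have c21 : (0 : ℤ) = p10 * u0.1 + p11 * u1.1 := by
      have := congrArg Prod.fst hE2; rwa [hcomp1] at this
    have c22 : (1 : ℤ) = p10 * u0.2 + p11 * u1.2 := by
      have := congrArg Prod.snd hE2; rwa [hcomp2] at this
    have hk : (p00 * p11 - p01 * p10) * Du = 1 := by
      linear_combination (-(p10 * u0.2 + p11 * u1.2)) * c11 + (p10 * u0.1 + p11 * u1.1) * c12
        + (-1 : ℤ) * c22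
    have : Du ∣ 1 := Dvd.intro_left _ hk
    have := Int.natAbs_dvd_natAbs.mpr this
    simpa using Nat.dvd_one.mp (by simpa using this)
  have hgcdu0 : Int.gcd u0.1 u0.2 = 1 := by
    have h1 : ((Int.gcd u0.1 u0.2 : ℤ)) ∣ Du :=
      dvd_sub (Dvd.dvd.mul_right (Int.gcd_dvd_left _ _) _) (Dvd.dvd.mul_right (Int.gcd_dvd_right _ _) _)
    have := Int.natAbs_dvd_natAbs.mpr h1
    rw [hDu1] at this
    exact Nat.dvd_one.mp (by simpa using this)
  have hgcdu1 : Int.gcd u1.1 u1.2 = 1 := by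
    have h1 : ((Int.gcd u1.1 u1.2 : ℤ)) ∣ Du :=
      dvd_sub (Dvd.dvd.mul_left (Int.gcd_dvd_right _ _) _) (Dvd.dvd.mul_left (Int.gcd_dvd_left _ _) _)
    have := Int.natAbs_dvd_natAbs.mpr h1
    rw [hDu1] at this
    exact Nat.dvd_one.mp (by simpa using this)
  -- α i • u i lies in L : expand in the w basis
  have hm0' : α 0 • u0 ∈ L := by rw [← hdiag 0]; exact (bL 0).2
  have hm1' : α 1 • u1 ∈ L := by rw [← hdiag 1]; exact (bL 1).2
  rw [hL, Submodule.mem_span_pair] at hm0' hm1'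
  obtain ⟨s0, t0, hst0⟩ := hm0'
  obtain ⟨s1, t1, hst1⟩ := hm1'
  have hsm1 : ∀ (s : ℤ) (v : ℤ × ℤ), (s • v).1 = s * v.1 := by intros; simp
  have hsm2 : ∀ (s : ℤ) (v : ℤ × ℤ), (s • v).2 = s * v.2 := by intros; simp
  have hA0 : s0 * (a + 1) + t0 * c = α 0 * u0.1 := by
    have h' := congrArg Prod.fst hst0
    rw [hcomp1, hsm1] at h'
    simpa [hw₁, hw₂] using h'
  have hB0 : s0 * b + t0 * (d + 1) = α 0 * u0.2 := by
    have h' := congrArg Prod.snd hst0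
    rw [hcomp2, hsm2] at h'
    simpa [hw₁, hw₂] using h'
  have hA1 : s1 * (a + 1) + t1 * c = α 1 * u1.1 := by
    have h' := congrArg Prod.fst hst1
    rw [hcomp1, hsm1] at h'
    simpa [hw₁, hw₂] using h'
  have hB1 : s1 * b + t1 * (d + 1) = α 1 * u1.2 := by
    have h' := congrArg Prod.snd hst1
    rw [hcomp2, hsm2] at h'
    simpa [hw₁, hw₂] using h'
  -- w's in terms of α i • u i
  have hw1mem : w₁ ∈ L := Submodule.subset_span (by simp)
  have hw2mem : w₂ ∈ L := Submodule.subset_span (by simp)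
  obtain ⟨P0, hP0⟩ := (hmemchar w₁).mp hw1mem 0
  obtain ⟨Q0, hQ0⟩ := (hmemchar w₁).mp hw1mem 1
  obtain ⟨P1, hP1⟩ := (hmemchar w₂).mp hw2mem 0
  obtain ⟨Q1, hQ1⟩ := (hmemchar w₂).mp hw2mem 1
  have hE1 := hbasis_expand w₁
  have hE2 := hbasis_expand w₂
  rw [hP0, hQ0] at hE1
  rw [hP1, hQ1] at hE2
  have gA : (a + 1 : ℤ) = (α 0 * P0) * u0.1 + (α 1 * Q0) * u1.1 := by
    have h' := congrArg Prod.fst hE1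
    rw [hcomp1] at h'
    simpa [hw₁] using h'
  have gB : (b : ℤ) = (α 0 * P0) * u0.2 + (α 1 * Q0) * u1.2 := by
    have h' := congrArg Prod.snd hE1
    rw [hcomp2] at h'
    simpa [hw₁] using h'
  have gC : (c : ℤ) = (α 0 * P1) * u0.1 + (α 1 * Q1) * u1.1 := by
    have h' := congrArg Prod.fst hE2
    rw [hcomp1] at h'
    simpa [hw₂] using h'
  have gD : (d + 1 : ℤ) = (α 0 * P1) * u0.2 + (α 1 * Q1) * u1.2 := by
    have h' := congrArg Prod.snd hE2
    rw [hcomp2] at h'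
    simpa [hw₂] using h'
  -- key determinant identities
  have key1 : α 0 * α 1 * Du = (s0 * t1 - t0 * s1) * D := by
    linear_combination (-(α 1 * u1.2)) * hA0 + (α 1 * u1.1) * hB0
      + (s0 * b + t0 * (d + 1)) * hA1 + (-(s0 * (a + 1) + t0 * c)) * hB1
      + (s0 * t1 - t0 * s1) * hdet
  have key2 : D = (P0 * Q1 - Q0 * P1) * (α 0 * α 1 * Du) := by
    linear_combination (-1 : ℤ) * hdet + (d + 1) * gA - c * gB
      - ((α 0 * P0) * u0.2 + (α 1 * Q0) * u1.2) * gC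
      + ((α 0 * P0) * u0.1 + (α 1 * Q0) * u1.1) * gD
  have key3 : (P0 * Q1 - Q0 * P1) * (s0 * t1 - t0 * s1) * D = 1 * D := by
    rw [mul_assoc, ← key1, ← key2, one_mul]
  have hunit : (P0 * Q1 - Q0 * P1) * (s0 * t1 - t0 * s1) = 1 := mul_right_cancel₀ hD0 key3
  have hst_abs : (s0 * t1 - t0 * s1).natAbs = 1 := by
    have hdd : (s0 * t1 - t0 * s1) ∣ 1 := Dvd.intro_left _ hunit
    have := Int.natAbs_dvd_natAbs.mpr hdd
    exact Nat.dvd_one.mp (by simpa using this)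
  -- |α 0| * |α 1| = N
  have hprodN : (α 0).natAbs * (α 1).natAbs = N := by
    have hcong := congrArg Int.natAbs key1
    rw [Int.natAbs_mul, Int.natAbs_mul, Int.natAbs_mul, hDu1, hst_abs, mul_one, one_mul] at hcong
    rw [hN]
    exact hcong
  -- r divides α i
  have hra : (r : ℤ) ∣ (a + 1) := by rw [hr]; exact (Int.gcd_dvd_left _ _)
  have hrX : (r : ℤ) ∣ ((Int.gcd c (Int.gcd b (d + 1)) : ℕ) : ℤ) := by
    rw [hr]; exact (Int.gcd_dvd_right _ _)
  have hrc : (r : ℤ) ∣ c := hrX.trans (Int.gcd_dvd_left _ _)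
  have hrY : (r : ℤ) ∣ ((Int.gcd b (d + 1) : ℕ) : ℤ) := hrX.trans (Int.gcd_dvd_right _ _)
  have hrb : (r : ℤ) ∣ b := hrY.trans (Int.gcd_dvd_left _ _)
  have hrd : (r : ℤ) ∣ (d + 1) := hrY.trans (Int.gcd_dvd_right _ _)
  have hrα0 : r ∣ (α 0).natAbs := by
    have d1 : (r : ℤ) ∣ α 0 * u0.1 := by
      rw [← hA0]; exact dvd_add (hra.mul_left s0) (hrc.mul_left t0)
    have d2 : (r : ℤ) ∣ α 0 * u0.2 := by
      rw [← hB0]; exact dvd_add (hrb.mul_left s0) (hrd.mul_left t0)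
    have hg' : (r : ℤ) ∣ ((Int.gcd (α 0 * u0.1) (α 0 * u0.2) : ℕ) : ℤ) := Int.dvd_coe_gcd d1 d2
    rw [Int.gcd_mul_left, hgcdu0, mul_one] at hg'
    exact_mod_cast hg'
  have hrα1 : r ∣ (α 1).natAbs := by
    have d1 : (r : ℤ) ∣ α 1 * u1.1 := by
      rw [← hA1]; exact dvd_add (hra.mul_left s1) (hrc.mul_left t1)
    have d2 : (r : ℤ) ∣ α 1 * u1.2 := by
      rw [← hB1]; exact dvd_add (hrb.mul_left s1) (hrd.mul_left t1)
    have hg' : (r : ℤ) ∣ ((Int.gcd (α 1 * u1.1) (α 1 * u1.2) : ℕ) : ℤ) := Int.dvd_coe_gcd d1 d2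
    rw [Int.gcd_mul_left, hgcdu1, mul_one] at hg'
    exact_mod_cast hg'
  -- gcd(α 0, α 1) divides r
  have hgdvd : Nat.gcd (α 0).natAbs (α 1).natAbs ∣ r := by
    set g := Nat.gcd (α 0).natAbs (α 1).natAbs with hgdef
    have hga0 : (g : ℤ) ∣ α 0 :=
      ((Int.natCast_dvd_natCast.mpr (Nat.gcd_dvd_left _ _)).trans
        (Int.natAbs_dvd.mpr (dvd_refl (α 0))))
    have hga1 : (g : ℤ) ∣ α 1 :=
      ((Int.natCast_dvd_natCast.mpr (Nat.gcd_dvd_right _ _)).trans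
        (Int.natAbs_dvd.mpr (dvd_refl (α 1))))
    have dA : (g : ℤ) ∣ (a + 1) := by
      rw [gA]; exact dvd_add ((hga0.mul_right P0).mul_right _) ((hga1.mul_right Q0).mul_right _)
    have dB : (g : ℤ) ∣ b := by
      rw [gB]; exact dvd_add ((hga0.mul_right P0).mul_right _) ((hga1.mul_right Q0).mul_right _)
    have dC : (g : ℤ) ∣ c := by
      rw [gC]; exact dvd_add ((hga0.mul_right P1).mul_right _) ((hga1.mul_right Q1).mul_right _)
    have dD : (g : ℤ) ∣ (d + 1) := by
      rw [gD]; exact dvd_add ((hga0.mul_right P1).mul_right _) ((hga1.mul_right Q1).mul_right _)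
    have : (g : ℤ) ∣ (r : ℤ) := by
      rw [hr]
      exact Int.dvd_coe_gcd dA (Int.dvd_coe_gcd dC (Int.dvd_coe_gcd dB dD))
    exact_mod_cast this
  have hgcd : Nat.gcd (α 0).natAbs (α 1).natAbs = r :=
    Nat.dvd_antisymm hgdvd (Nat.dvd_gcd hrα0 hrα1)
  -- conclude
  have hNne : N ≠ 0 := by rw [hN]; exact Int.natAbs_ne_zero.mpr hD0
  have hgl := Nat.gcd_mul_lcm (α 0).natAbs (α 1).natAbs
  rw [hgcd, hprodN] at hgl
  have hrne : r ≠ 0 := by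
    intro h0
    rw [h0, zero_mul] at hgl
    exact hNne hgl.symm
  have hNdr : N / r = Nat.lcm (α 0).natAbs (α 1).natAbs := by
    rw [← hgl]
    exact Nat.mul_div_cancel_left _ (Nat.pos_of_ne_zero hrne)
  obtain ⟨E5⟩ := quot_equiv_of_diag L bM α hmemchar
  obtain ⟨E6⟩ := zmod_prod_equiv_gcd_lcm (α 0).natAbs (α 1).natAbs
  rw [hgcd] at E6
  rw [hNdr]
  have hre : ∀ x : ZMod N × ZMod N, x ∈ F.range ↔ x ∈ LinearMap.range Flin := fun x => Iff.rfl
  have g0 : F.range ≃+ LinearMap.range Flin :=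
    { toFun := fun x => ⟨x.1, (hre _).mp x.2⟩
      invFun := fun x => ⟨x.1, (hre _).mpr x.2⟩
      left_inv := fun _ => rfl
      right_inv := fun _ => rfl
      map_add' := fun _ _ => rfl }
  exact ⟨g0.trans ((Flin.quotKerEquivRange.symm.toAddEquiv).trans
    (((Submodule.quotEquivOfEq _ _ hker).toAddEquiv).trans (E5.trans E6)))⟩
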